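/- For any w ∈ C ∩ B̄_β, the Fréchet normal cone satisfies N̂(w, C ∩ B̄_β) = { y ∈ ℝ^d : for all i ∈ I(w) ∪ J(w) and all j ∈ {1,…,d_i}, y^i_j ≥ 0 if w^i_j = β, y^i_j = 0 if |w^i_j| < β, and y^i_j ≤ 0 if w^i_j = −β }. -/

import Mathlib

open MeasureTheory Filter
open scoped Classical BigOperators

noncomputable section

/-- The closed `l∞`-ball of radius `r` centered at `0` in `ℝ^d`. -/
def Binf (d : ℕ) (r : ℝ) : Set (EuclideanSpace ℝ (Fin d)) := {z | ∀ i, |z i| ≤ r}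

/-- The weighted group `l0`-norm constraint set
`C := {w : Σ_i p_i · 1_{w^i ≠ 0}(w) ≤ m}`, where the partition of coordinates into `n` blocks
is encoded by `blk : Fin d → Fin n` (coordinate `j` belongs to block `blk j`). -/
def groupC (d n : ℕ) (blk : Fin d → Fin n) (p : Fin n → ℝ) (m : ℝ) :
    Set (EuclideanSpace ℝ (Fin d)) :=
  {w | (∑ i : Fin n, if ∃ j, blk j = i ∧ w j ≠ 0 then p i else 0) ≤ m}

/-- The Fréchet normal cone of `S` at `w`:
`N̂(w,S) = {y : limsup_{x → w, x ∈ S, x ≠ w} ⟨y, x−w⟩/‖x−w‖₂ ≤ 0}`, expressed in ε-δ form. -/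
def frechetNormalCone {d : ℕ} (S : Set (EuclideanSpace ℝ (Fin d)))
    (w : EuclideanSpace ℝ (Fin d)) : Set (EuclideanSpace ℝ (Fin d)) :=
  {y | ∀ ε > (0 : ℝ), ∃ δ > (0 : ℝ), ∀ x ∈ S, x ≠ w → ‖x - w‖ < δ →
    (inner ℝ y (x - w) : ℝ) ≤ ε * ‖x - w‖}

/-- The set of block indices whose block of `w` is nonzero: `I(w) := {i : w^i ≠ 0}`. -/
def blkSupport {d n : ℕ} (blk : Fin d → Fin n) (w : EuclideanSpace ℝ (Fin d)) :
    Set (Fin n) := {i | ∃ j, blk j = i ∧ w j ≠ 0}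

/-- The aggregate penalty `Σ_{i ∈ I(w)} p_i` of the nonzero blocks of `w`. -/
def suppPenalty {d n : ℕ} (blk : Fin d → Fin n) (p : Fin n → ℝ)
    (w : EuclideanSpace ℝ (Fin d)) : ℝ :=
  ∑ i : Fin n, if i ∈ blkSupport blk w then p i else 0

/-- `J(w) := {j ∉ I(w) : Σ_{i ∈ I(w)} p_i + p_j ≤ m}`, the blocks of `w` that are zero but are
not constrained to be. -/
def blkFree {d n : ℕ} (blk : Fin d → Fin n) (p : Fin n → ℝ) (m : ℝ)
    (w : EuclideanSpace ℝ (Fin d)) : Set (Fin n) :=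
  {i | i ∉ blkSupport blk w ∧ suppPenalty blk p w + p i ≤ m}

lemma coord_le_norm' {d : ℕ} (x : EuclideanSpace ℝ (Fin d)) (j : Fin d) : |x j| ≤ ‖x‖ := by
  have h := abs_real_inner_le_norm (EuclideanSpace.single j (1:ℝ)) x
  simpa [EuclideanSpace.inner_single_left] using h

lemma inner_expand' {d : ℕ} (y z : EuclideanSpace ℝ (Fin d)) :
    (inner ℝ y z : ℝ) = ∑ j, y j * z j := by
  simp [PiLp.inner_apply, RCLike.inner_apply, mul_comm]

/-- For any `w ∈ C ∩ B̄_β`, the Fréchet normal cone satisfies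
`N̂(w, C ∩ B̄_β) = {y : ∀ i ∈ I(w) ∪ J(w), ∀ j ∈ block i, y^i_j ≥ 0 if w^i_j = β,
y^i_j = 0 if |w^i_j| < β, and y^i_j ≤ 0 if w^i_j = −β}`. -/
theorem frechet_normal_cone_C_inter_ball
    (d n : ℕ) (blk : Fin d → Fin n) (hblk : Function.Surjective blk)
    (p : Fin n → ℝ) (hp : ∀ i, 0 < p i) (m : ℝ) (hm : 0 < m)
    (β : ℝ) (hβ : 0 < β)
    (w : EuclideanSpace ℝ (Fin d)) (hw : w ∈ groupC d n blk p m ∩ Binf d β) :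
    frechetNormalCone (groupC d n blk p m ∩ Binf d β) w
      = {y : EuclideanSpace ℝ (Fin d) |
          ∀ i : Fin n, (i ∈ blkSupport blk w ∨ i ∈ blkFree blk p m w) →
            ∀ j : Fin d, blk j = i →
              (w j = β → 0 ≤ y j) ∧ (|w j| < β → y j = 0) ∧ (w j = -β → y j ≤ 0)} := by
  obtain ⟨hwC, hwB⟩ := hw
  have hwC' : (∑ i : Fin n, if ∃ k, blk k = i ∧ w k ≠ 0 then p i else 0) ≤ m := hwC
  have hsupp : suppPenalty blk p w
      = ∑ i : Fin n, if ∃ k, blk k = i ∧ w k ≠ 0 then p i else 0 := by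
    unfold suppPenalty
    refine Finset.sum_congr rfl fun i _ => ?_
    by_cases h : i ∈ blkSupport blk w
    · rw [if_pos h, if_pos (show ∃ k, blk k = i ∧ w k ≠ 0 from h)]
    · rw [if_neg h, if_neg (show ¬∃ k, blk k = i ∧ w k ≠ 0 from h)]
  ext y
  simp only [frechetNormalCone, Set.mem_setOf_eq]
  constructor
  · -- normal cone ⊆ sign conditions
    intro hy i hi j hji
    -- membership of perturbed points
    have hxmem : ∀ t : ℝ, |w j + t| ≤ β →
        (w + t • EuclideanSpace.single j (1:ℝ)) ∈ groupC d n blk p m ∩ Binf d β := by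
      intro t ht
      set x := w + t • EuclideanSpace.single j (1:ℝ) with hxdef
      have hxk : ∀ k, x k = w k + t * (if k = j then 1 else 0) := by
        intro k; simp [hxdef, EuclideanSpace.single_apply]
      have hxkne : ∀ k, k ≠ j → x k = w k := by
        intro k hk; rw [hxk k, if_neg hk, mul_zero, add_zero]
      constructor
      · show (∑ i' : Fin n, if ∃ k, blk k = i' ∧ x k ≠ 0 then p i' else 0) ≤ m
        rcases hi with hiI | hiJ
        · -- i ∈ I(w)
          calc (∑ i' : Fin n, if ∃ k, blk k = i' ∧ x k ≠ 0 then p i' else 0)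
              ≤ ∑ i' : Fin n, if ∃ k, blk k = i' ∧ w k ≠ 0 then p i' else 0 := by
                apply Finset.sum_le_sum
                intro i' _
                by_cases h1 : ∃ k, blk k = i' ∧ x k ≠ 0
                · rw [if_pos h1]
                  obtain ⟨k, hk1, hk2⟩ := h1
                  by_cases hkj : k = j
                  · have hii : i' = i := by rw [← hk1, hkj, hji]
                    subst hii
                    rw [if_pos (show ∃ k, blk k = i' ∧ w k ≠ 0 from hiI)]
                  · have hwk : w k ≠ 0 := by rw [← hxkne k hkj]; exact hk2
                    rw [if_pos ⟨k, hk1, hwk⟩]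
                · rw [if_neg h1]
                  split
                  · exact (hp _).le
                  · exact le_rfl
            _ ≤ m := hwC'
        · -- i ∈ J(w)
          have hiI : i ∉ blkSupport blk w := hiJ.1
          calc (∑ i' : Fin n, if ∃ k, blk k = i' ∧ x k ≠ 0 then p i' else 0)
              ≤ ∑ i' : Fin n, ((if ∃ k, blk k = i' ∧ w k ≠ 0 then p i' else 0)
                  + (if i' = i then p i' else 0)) := by
                apply Finset.sum_le_sum
                intro i' _
                have hA : (0:ℝ) ≤ if ∃ k, blk k = i' ∧ w k ≠ 0 then p i' else 0 := by
                  split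
                  · exact (hp _).le
                  · exact le_rfl
                have hB : (0:ℝ) ≤ if i' = i then p i' else 0 := by
                  split
                  · exact (hp _).le
                  · exact le_rfl
                by_cases h1 : ∃ k, blk k = i' ∧ x k ≠ 0
                · rw [if_pos h1]
                  obtain ⟨k, hk1, hk2⟩ := h1
                  by_cases hkj : k = j
                  · have hii : i' = i := by rw [← hk1, hkj, hji]
                    subst hii
                    rw [if_pos rfl]
                    linarith
                  · have hwk : w k ≠ 0 := by rw [← hxkne k hkj]; exact hk2
                    rw [if_pos ⟨k, hk1, hwk⟩]
                    linarith
                · rw [if_neg h1]; linarith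
            _ = (∑ i' : Fin n, if ∃ k, blk k = i' ∧ w k ≠ 0 then p i' else 0) + p i := by
                rw [Finset.sum_add_distrib, Finset.sum_ite_eq' Finset.univ i p,
                  if_pos (Finset.mem_univ i)]
            _ ≤ m := by rw [← hsupp]; exact hiJ.2
      · intro k
        by_cases hkj : k = j
        · subst hkj; rw [hxk k, if_pos rfl, mul_one]; exact ht
        · rw [hxkne k hkj]; exact hwB k
    -- key inequality along coordinate directions
    have key : ∀ ε > (0:ℝ), ∃ δ > (0:ℝ), ∀ t : ℝ, t ≠ 0 → |t| < δ → |w j + t| ≤ β →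
        t * y j ≤ ε * |t| := by
      intro ε hε
      obtain ⟨δ, hδ, hδ'⟩ := hy ε hε
      refine ⟨δ, hδ, ?_⟩
      intro t ht htδ htβ
      set x := w + t • EuclideanSpace.single j (1:ℝ) with hxdef
      have hxw : x - w = t • EuclideanSpace.single j (1:ℝ) := by
        rw [hxdef]; abel
      have hnorm : ‖x - w‖ = |t| := by
        rw [hxw, norm_smul, EuclideanSpace.norm_single, norm_one, mul_one, Real.norm_eq_abs]
      have hsubk : ∀ k, (x - w) k = t * (if k = j then 1 else 0) := by
        intro k; rw [hxw]; simp [EuclideanSpace.single_apply]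
      have hinner : (inner ℝ y (x - w) : ℝ) = t * y j := by
        rw [inner_expand']
        have : ∀ k : Fin d, y k * (x - w) k = if k = j then t * y j else 0 := by
          intro k
          rw [hsubk k]
          by_cases hk : k = j
          · subst hk; simp [mul_comm]
          · simp [hk]
        rw [Finset.sum_congr rfl (fun k _ => this k),
          Finset.sum_ite_eq' Finset.univ j (fun _ => t * y j), if_pos (Finset.mem_univ j)]
      have hxne : x ≠ w := by
        intro h
        apply ht
        have := congrArg (fun v : EuclideanSpace ℝ (Fin d) => v j) h
        simp only [hxdef] at this
        have h2 : w j + t * 1 = w j := by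
          simpa [EuclideanSpace.single_apply] using this
        linarith
      have := hδ' x (hxmem t htβ) hxne (by rw [hnorm]; exact htδ)
      rwa [hinner, hnorm] at this
    -- derive sign conditions
    have keypos : ∀ s : ℝ, 0 < s → (∀ t : ℝ, 0 < t → t ≤ s → |w j + t| ≤ β) → y j ≤ 0 := by
      intro s hs hok
      by_contra h
      push_neg at h
      obtain ⟨δ, hδ, hk⟩ := key (y j / 2) (by linarith)
      set t := min (δ/2) s with htdef
      have ht0 : 0 < t := lt_min (by linarith) hs
      have habs : |t| = t := abs_of_pos ht0
      have h1 : |t| < δ := by rw [habs]; exact lt_of_le_of_lt (min_le_left _ _) (by linarith)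
      have h2 := hok t ht0 (min_le_right _ _)
      have h3 := hk t (ne_of_gt ht0) h1 h2
      rw [habs] at h3
      nlinarith
    have keyneg : ∀ s : ℝ, 0 < s → (∀ t : ℝ, -s ≤ t → t < 0 → |w j + t| ≤ β) → 0 ≤ y j := by
      intro s hs hok
      by_contra h
      push_neg at h
      obtain ⟨δ, hδ, hk⟩ := key (-(y j) / 2) (by linarith)
      set t := -(min (δ/2) s) with htdef
      have hc : 0 < min (δ/2) s := lt_min (by linarith) hs
      have ht0 : t < 0 := by rw [htdef]; linarith
      have habs : |t| = min (δ/2) s := by rw [htdef, abs_neg, abs_of_pos hc]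
      have h1 : |t| < δ := by rw [habs]; exact lt_of_le_of_lt (min_le_left _ _) (by linarith)
      have h2 := hok t (by rw [htdef]; exact neg_le_neg (min_le_right _ _)) ht0
      have h3 := hk t (ne_of_lt ht0) h1 h2
      rw [habs] at h3
      rw [htdef] at h3
      nlinarith
    refine ⟨?_, ?_, ?_⟩
    · intro hwj
      apply keyneg β hβ
      intro t ht1 ht2
      rw [hwj, abs_le]
      constructor <;> linarith
    · intro hwj
      have hs : 0 < β - |w j| := by linarith
      have habs : ∀ t : ℝ, |t| ≤ β - |w j| → |w j + t| ≤ β := by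
        intro t ht
        calc |w j + t| ≤ |w j| + |t| := abs_add_le _ _
          _ ≤ β := by linarith
      have hle : y j ≤ 0 := by
        apply keypos _ hs
        intro t ht1 ht2
        exact habs t (by rw [abs_of_pos ht1]; exact ht2)
      have hge : 0 ≤ y j := by
        apply keyneg _ hs
        intro t ht1 ht2
        exact habs t (by rw [abs_of_neg ht2]; linarith)
      linarith
    · intro hwj
      apply keypos β hβ
      intro t ht1 ht2
      rw [hwj, abs_le]
      constructor <;> linarith
  · -- sign conditions ⊆ normal cone
    intro hy ε hε
    obtain ⟨δ, hδpos, hδ'⟩ : ∃ δ > (0:ℝ), ∀ k : Fin d, w k ≠ 0 → δ ≤ |w k| := by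
      refine ⟨(insert (1:ℝ) ((Finset.univ.filter (fun k => w k ≠ 0)).image
        (fun k => |w k|))).min' (Finset.insert_nonempty _ _), ?_, ?_⟩
      · rw [gt_iff_lt, Finset.lt_min'_iff]
        intro b hb
        rcases Finset.mem_insert.1 hb with rfl | hb
        · norm_num
        · obtain ⟨k, hk, rfl⟩ := Finset.mem_image.1 hb
          exact abs_pos.2 (by simpa using (Finset.mem_filter.1 hk).2)
      · intro k hk
        exact Finset.min'_le _ _ (Finset.mem_insert.2 (Or.inr (Finset.mem_image.2
          ⟨k, Finset.mem_filter.2 ⟨Finset.mem_univ _, hk⟩, rfl⟩)))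
    refine ⟨δ, hδpos, ?_⟩
    intro x hx hxne hxw
    have hsub : ∀ k, w k ≠ 0 → x k ≠ 0 := by
      intro k hk h0
      have h1 : |(x - w) k| ≤ ‖x - w‖ := coord_le_norm' (x - w) k
      have h2 : (x - w) k = x k - w k := rfl
      rw [h2, h0, zero_sub, abs_neg] at h1
      have := hδ' k hk
      linarith
    have hzero : ∀ k : Fin d,
        (blk k ∈ blkSupport blk w ∨ blk k ∈ blkFree blk p m w) ∨ (x k = 0 ∧ w k = 0) := by
      intro k
      by_cases hIk : blk k ∈ blkSupport blk w
      · exact Or.inl (Or.inl hIk)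
      by_cases hJk : blk k ∈ blkFree blk p m w
      · exact Or.inl (Or.inr hJk)
      right
      have hwk : w k = 0 := by
        by_contra h; exact hIk ⟨k, rfl, h⟩
      refine ⟨?_, hwk⟩
      by_contra hxk
      have hJ' : m < suppPenalty blk p w + p (blk k) := by
        by_contra h; push_neg at h; exact hJk ⟨hIk, h⟩
      have hxC : (∑ i' : Fin n, if ∃ kk, blk kk = i' ∧ x kk ≠ 0 then p i' else 0) ≤ m := hx.1
      have hge : ∀ i' : Fin n,
          (if i' ∈ blkSupport blk w then p i' else 0) + (if i' = blk k then p i' else 0)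
            ≤ (if ∃ kk, blk kk = i' ∧ x kk ≠ 0 then p i' else 0) := by
        intro i'
        by_cases h1 : i' ∈ blkSupport blk w
        · obtain ⟨kk, hk1, hk2⟩ := h1
          have hex : ∃ kk, blk kk = i' ∧ x kk ≠ 0 := ⟨kk, hk1, hsub kk hk2⟩
          have h2 : i' ≠ blk k := by
            intro h; exact hIk (h ▸ (⟨kk, hk1, hk2⟩ : i' ∈ blkSupport blk w))
          have h1' : i' ∈ blkSupport blk w := ⟨kk, hk1, hk2⟩
          rw [if_pos h1', if_neg h2, if_pos hex, add_zero]
        · by_cases h2 : i' = blk k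
          · subst h2
            rw [if_neg h1, if_pos rfl,
              if_pos (show ∃ kk, blk kk = blk k ∧ x kk ≠ 0 from ⟨k, rfl, hxk⟩), zero_add]
          · rw [if_neg h1, if_neg h2, zero_add]
            split
            · exact (hp _).le
            · exact le_rfl
      have hsumge := Finset.sum_le_sum (fun i' (_ : i' ∈ Finset.univ) => hge i')
      rw [Finset.sum_add_distrib, Finset.sum_ite_eq' Finset.univ (blk k) p,
        if_pos (Finset.mem_univ _)] at hsumge
      have : suppPenalty blk p w + p (blk k) ≤ m := le_trans hsumge hxC
      linarith
    have hterm : ∀ k : Fin d, y k * (x k - w k) ≤ 0 := by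
      intro k
      rcases hzero k with h | ⟨hx0, hw0⟩
      · obtain ⟨h1, h2, h3⟩ := hy (blk k) h k rfl
        have habs : |w k| ≤ β := hwB k
        rcases lt_or_eq_of_le habs with hlt | heq
        · rw [h2 hlt, zero_mul]
        · rcases (abs_eq hβ.le).1 heq with h4 | h4
          · have hy0 := h1 h4
            have hxk : x k ≤ β := le_trans (le_abs_self _) (hx.2 k)
            have : x k - w k ≤ 0 := by rw [h4]; linarith
            exact mul_nonpos_of_nonneg_of_nonpos hy0 this
          · have hy0 := h3 h4
            have hxk : -β ≤ x k := by
              have := hx.2 k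
              have := neg_abs_le (x k)
              linarith
            have : 0 ≤ x k - w k := by rw [h4]; linarith
            exact mul_nonpos_of_nonpos_of_nonneg hy0 this
      · rw [hx0, hw0]; simp
    calc (inner ℝ y (x - w) : ℝ) = ∑ k, y k * (x k - w k) := by rw [inner_expand']; rfl
      _ ≤ 0 := Finset.sum_nonpos (fun k _ => hterm k)
      _ ≤ ε * ‖x - w‖ := by positivity
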